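/- A commutative ring A is a Gelfand ring if and only if for every maximal ideal 𝔪 of A the canonical localization map A → A_𝔪 is surjective. -/

import Mathlib

lemma gelfand_exists_annihilator {A : Type*} [CommRing A]
    (h : ∀ p : Ideal A, p.IsPrime → ∃! m : Ideal A, m.IsMaximal ∧ p ≤ m)
    {m : Ideal A} (hm : m.IsMaximal) {s : A} (hs : s ∉ m) :
    ∃ u t : A, t ∉ m ∧ t * (u * s - 1) = 0 := by
  obtain ⟨c, w, hw, hcw⟩ := hm.exists_inv hs
  by_cases h0 : ∃ r t : A, (1 + c * s * r) * (1 + w * t) = 0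
  · obtain ⟨r, t, hrt⟩ := h0
    refine ⟨-(c * r), 1 + w * t, fun hmem => ?_, by linear_combination -hrt⟩
    have h1 : (1 : A) ∈ m := by
      have := m.sub_mem hmem (m.mul_mem_right t hw)
      simpa using this
    exact hm.ne_top (Ideal.eq_top_iff_one m |>.2 h1)
  · exfalso
    push_neg at h0
    set S : Submonoid A :=
      { carrier := {z | ∃ r t : A, z = (1 + c * s * r) * (1 + w * t)}
        one_mem' := ⟨0, 0, by ring⟩
        mul_mem' := by
          rintro x y ⟨r, t, rfl⟩ ⟨r', t', rfl⟩
          exact ⟨r + r' + c * s * r * r', t + t' + w * t * t', by ring⟩ } with hS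
    have hdisj : Disjoint ((⊥ : Ideal A) : Set A) (S : Set A) := by
      rw [Set.disjoint_left]
      rintro x hx ⟨r, t, rfl⟩
      exact h0 r t (by simpa using hx)
    obtain ⟨p, hp, -, hpdisj⟩ := Ideal.exists_le_prime_disjoint ⊥ S hdisj
    -- p + (c*s) is proper
    have hne1 : p ⊔ Ideal.span {c * s} ≠ ⊤ := by
      intro htop
      have h1 : (1 : A) ∈ p ⊔ Ideal.span {c * s} := htop ▸ Submodule.mem_top
      obtain ⟨y, hy, z, hz, hyz⟩ := Submodule.mem_sup.mp h1
      obtain ⟨r, hr⟩ := Ideal.mem_span_singleton'.mp hz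
      have hyS : y ∈ (S : Set A) := ⟨-r, 0, by linear_combination hyz + hr⟩
      exact Set.disjoint_left.mp hpdisj hy hyS
    have hne2 : p ⊔ Ideal.span {w} ≠ ⊤ := by
      intro htop
      have h1 : (1 : A) ∈ p ⊔ Ideal.span {w} := htop ▸ Submodule.mem_top
      obtain ⟨y, hy, z, hz, hyz⟩ := Submodule.mem_sup.mp h1
      obtain ⟨t, ht⟩ := Ideal.mem_span_singleton'.mp hz
      have hyS : y ∈ (S : Set A) := ⟨0, -t, by linear_combination hyz + ht⟩
      exact Set.disjoint_left.mp hpdisj hy hyS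
    obtain ⟨m₁, hm₁, hle₁⟩ := Ideal.exists_le_maximal _ hne1
    obtain ⟨m₂, hm₂, hle₂⟩ := Ideal.exists_le_maximal _ hne2
    obtain ⟨n, -, hn⟩ := h p hp
    have e₁ : m₁ = n := hn m₁ ⟨hm₁, le_trans le_sup_left hle₁⟩
    have e₂ : m₂ = n := hn m₂ ⟨hm₂, le_trans le_sup_left hle₂⟩
    have hcs : c * s ∈ n := e₁ ▸ hle₁ (le_sup_right (a := p) (Ideal.subset_span rfl))
    have hwn : w ∈ n := e₂ ▸ hle₂ (le_sup_right (a := p) (Ideal.subset_span rfl))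
    have h1 : (1 : A) ∈ n := hcw ▸ n.add_mem hcs hwn
    exact (e₁ ▸ hm₁).ne_top (Ideal.eq_top_iff_one n |>.2 h1)

theorem gelfand_iff_localization_at_maximal_surjective (A : Type*) [CommRing A] :
    (∀ p : Ideal A, p.IsPrime → ∃! m : Ideal A, m.IsMaximal ∧ p ≤ m) ↔
      ∀ (m : Ideal A) (hm : m.IsMaximal),
        Function.Surjective
          (algebraMap A (Localization (@Ideal.primeCompl A _ m hm.isPrime))) := by
  constructor
  · intro h m hm z
    obtain ⟨⟨a, s⟩, rfl⟩ := IsLocalization.mk'_surjective (@Ideal.primeCompl A _ m hm.isPrime) z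
    obtain ⟨u, t, htm, htu⟩ := gelfand_exists_annihilator h hm s.2
    refine ⟨u * a, ?_⟩
    rw [IsLocalization.eq_mk'_iff_mul_eq, ← map_mul,
      IsLocalization.eq_iff_exists (@Ideal.primeCompl A _ m hm.isPrime)]
    exact ⟨⟨t, htm⟩, by simp only []; linear_combination a * htu⟩
  · intro h p hp
    obtain ⟨m, hm, hpm⟩ := Ideal.exists_le_maximal p hp.ne_top
    refine ⟨m, ⟨hm, hpm⟩, ?_⟩
    rintro m' ⟨hm', hpm'⟩
    -- show m' = m; suffices m' ≤ m
    have hle : m' ≤ m := by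
      intro x hx
      by_contra hxm
      have hxc : x ∈ m.primeCompl := hxm
      obtain ⟨a, ha⟩ := h m hm (IsLocalization.mk' _ (1 : A) ⟨x, hxc⟩)
      have key : algebraMap A (Localization (@Ideal.primeCompl A _ m hm.isPrime)) (a * x)
          = algebraMap A (Localization (@Ideal.primeCompl A _ m hm.isPrime)) 1 := by
        rw [map_mul, ha, mul_comm]
        exact IsLocalization.mk'_spec' (Localization (@Ideal.primeCompl A _ m hm.isPrime)) 1 ⟨x, hxc⟩
      obtain ⟨c, hc⟩ := (IsLocalization.eq_iff_exists (@Ideal.primeCompl A _ m hm.isPrime) (Localization (@Ideal.primeCompl A _ m hm.isPrime))).mp key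
      have hcp : (c : A) ∉ p := fun hcp => c.2 (hpm hcp)
      have hmem : (c : A) * (a * x) - c * 1 ∈ p := by rw [hc]; simp
      have : (c : A) * (a * x - 1) ∈ p := by
        have := hmem; rw [show (c : A) * (a * x) - c * 1 = c * (a * x - 1) by ring] at this
        exact this
      have hax : a * x - 1 ∈ p := ((hp.mem_or_mem this).resolve_left hcp)
      have h1 : (1 : A) ∈ m' := by
        have := m'.sub_mem (m'.mul_mem_left a hx) (hpm' hax)
        simpa using this
      exact hm'.ne_top (Ideal.eq_top_iff_one m' |>.2 h1)
    exact hm'.eq_of_le hm.ne_top hle
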